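/- Let H = ℂ viewed as a real Hilbert space, α = 3, Q(x) = i·x (the 90° rotation, which is monotone and Lipschitz). For any constants c₁, c₂ ∈ ℝ, the function x(t) = c₁(1 − i t)/t² + c₂ e^{−i t}/t² solves the second-order equation ẍ(t) + (3/t)ẋ(t) + d/dt Q(x(t)) + (1/t)Q(x(t)) = 0 for all t > 0. -/

import Mathlib

open Complex

noncomputable def N9 (c₁ c₂ : ℝ) (s : ℝ) : ℂ :=
  c₁ * (1 - Complex.I * s) + c₂ * Complex.exp (-(Complex.I * s))

noncomputable def A9 (c₁ c₂ : ℝ) (s : ℝ) : ℂ :=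
  -(c₁ : ℂ) * Complex.I - c₂ * Complex.I * Complex.exp (-(Complex.I * s))

noncomputable def F1 (c₁ c₂ : ℝ) (s : ℝ) : ℂ :=
  (A9 c₁ c₂ s * s ^ 2 - N9 c₁ c₂ s * (2 * s)) / (s : ℂ) ^ 4

noncomputable def F2 (c₁ c₂ : ℝ) (s : ℝ) : ℂ :=
  (((-(c₂ : ℂ) * Complex.exp (-(Complex.I * s)) * s ^ 2 + A9 c₁ c₂ s * (2 * s))
      - (A9 c₁ c₂ s * (2 * s) + N9 c₁ c₂ s * 2)) * (s : ℂ) ^ 4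
    - (A9 c₁ c₂ s * s ^ 2 - N9 c₁ c₂ s * (2 * s)) * (4 * (s : ℂ) ^ 3)) / (s : ℂ) ^ 8

lemma hre (t : ℝ) : HasDerivAt (fun s : ℝ => (s : ℂ)) 1 t := by
  simpa using (hasDerivAt_id t).ofReal_comp

lemma hA (c₁ c₂ : ℝ) (t : ℝ) :
    HasDerivAt (A9 c₁ c₂) (-(c₂ : ℂ) * Complex.exp (-(Complex.I * t))) t := by
  have hE : HasDerivAt (fun s : ℝ => Complex.exp (-(Complex.I * s)))
      (Complex.exp (-(Complex.I * t)) * -(Complex.I * 1)) t :=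
    (((hre t).const_mul Complex.I).neg).cexp
  have := (hE.const_mul ((c₂ : ℂ) * Complex.I)).const_sub (-(c₁ : ℂ) * Complex.I)
  have h2 : HasDerivAt (A9 c₁ c₂) (-(↑c₂ * Complex.I * (Complex.exp (-(Complex.I * t)) * -(Complex.I * 1)))) t := this
  convert h2 using 1
  have hI : (Complex.I) ^ 2 = -1 := Complex.I_sq
  ring_nf
  linear_combination (-(c₂ : ℂ) * Complex.exp (-(Complex.I * t))) * hI

lemma hN (c₁ c₂ : ℝ) (t : ℝ) : HasDerivAt (N9 c₁ c₂) (A9 c₁ c₂ t) t := by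
  have hE : HasDerivAt (fun s : ℝ => Complex.exp (-(Complex.I * s)))
      (Complex.exp (-(Complex.I * t)) * -(Complex.I * 1)) t :=
    (((hre t).const_mul Complex.I).neg).cexp
  have h1 : HasDerivAt (fun s : ℝ => (c₁ : ℂ) * (1 - Complex.I * s))
      ((c₁ : ℂ) * -(Complex.I * 1)) t :=
    (((hre t).const_mul Complex.I).const_sub 1).const_mul _
  have := h1.add (hE.const_mul (c₂ : ℂ))
  convert this using 1
  · rfl
  · rfl
  unfold A9; ring

lemma hpow (t : ℝ) (n : ℕ) :
    HasDerivAt (fun s : ℝ => (s : ℂ) ^ n) ((n : ℂ) * (t : ℂ) ^ (n - 1)) t :=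
  (hasDerivAt_pow n (t : ℂ)).comp_ofReal

lemma hF1 (c₁ c₂ : ℝ) {t : ℝ} (ht : t ≠ 0) :
    HasDerivAt (fun s : ℝ => N9 c₁ c₂ s / (s : ℂ) ^ 2) (F1 c₁ c₂ t) t := by
  have h2 : ((t : ℂ) ^ 2) ≠ 0 := pow_ne_zero _ (by exact_mod_cast ht)
  have := (hN c₁ c₂ t).div (hpow t 2) h2
  convert this using 1
  · rfl
  · rfl
  unfold F1
  rw [← pow_mul]
  push_cast
  ring_nf

lemma hF2 (c₁ c₂ : ℝ) {t : ℝ} (ht : t ≠ 0) :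
    HasDerivAt (F1 c₁ c₂) (F2 c₁ c₂ t) t := by
  have h4 : ((t : ℂ) ^ 4) ≠ 0 := pow_ne_zero _ (by exact_mod_cast ht)
  have hM : HasDerivAt (fun s : ℝ => A9 c₁ c₂ s * (s : ℂ) ^ 2 - N9 c₁ c₂ s * (2 * s))
      ((-(c₂ : ℂ) * Complex.exp (-(Complex.I * t)) * (t : ℂ) ^ 2 + A9 c₁ c₂ t * ((2 : ℂ) * (t : ℂ)))
        - (A9 c₁ c₂ t * (2 * t) + N9 c₁ c₂ t * 2)) t := by
    have ha := (hA c₁ c₂ t).mul (hpow t 2)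
    have hb := (hN c₁ c₂ t).mul (((hre t).const_mul 2))
    have := ha.sub hb
    convert this using 1
    · rfl
    · rfl
    push_cast; ring
  have := hM.div (hpow t 4) h4
  convert this using 1
  · rfl
  · rfl
  unfold F2
  rw [← pow_mul]
  push_cast
  ring_nf

theorem stmt9 (c₁ c₂ : ℝ) (x : ℝ → ℂ)
    (hx : ∀ t : ℝ, x t = (c₁ * (1 - Complex.I * t)) / t ^ 2
      + (c₂ * Complex.exp (-(Complex.I * t))) / t ^ 2) :
    ∀ t : ℝ, 0 < t →
      deriv (deriv x) t + (3 / (t : ℂ)) * deriv x t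
        + deriv (fun s : ℝ => Complex.I * x s) t + (1 / (t : ℂ)) * (Complex.I * x t) = 0 := by
  have hxf : x = fun s : ℝ => N9 c₁ c₂ s / (s : ℂ) ^ 2 := by
    funext s; rw [hx]; unfold N9; ring
  intro t ht
  have htne : t ≠ 0 := ht.ne'
  have htC : (t : ℂ) ≠ 0 := by exact_mod_cast htne
  have hd1 : ∀ s : ℝ, s ≠ 0 → HasDerivAt x (F1 c₁ c₂ s) s := by
    intro s hs; rw [hxf]; exact hF1 c₁ c₂ hs
  have hderiv1 : ∀ s : ℝ, s ≠ 0 → deriv x s = F1 c₁ c₂ s := fun s hs => (hd1 s hs).deriv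
  have hev : deriv x =ᶠ[nhds t] F1 c₁ c₂ := by
    filter_upwards [eventually_ne_nhds htne] with s hs using hderiv1 s hs
  have hderiv2 : deriv (deriv x) t = F2 c₁ c₂ t := by
    rw [hev.deriv_eq]; exact (hF2 c₁ c₂ htne).deriv
  have hderivI : deriv (fun s : ℝ => Complex.I * x s) t = Complex.I * F1 c₁ c₂ t :=
    ((hd1 t htne).const_mul Complex.I).deriv
  rw [hderiv2, hderivI, hderiv1 t htne, hx t]
  unfold F2 F1 A9 N9
  have hI : (Complex.I) ^ 2 = -1 := Complex.I_sq
  field_simp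
  ring_nf
  simp only [hI, inv_pow]
  field_simp
  ring
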